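/- Let T_{2k} be F_{2k} with its last b substituted by a (i.e., T_{2k} = F''_{2k}·aa). For k ≥ 6, the lexicographically largest suffix of T_{2k} (with a < b) is the suffix starting at position f_{2k-3}. -/

import Mathlib

/-- Strings over the binary alphabet `{a, b}`: `false` is `a`, `true` is `b`. -/
abbrev Word := List Bool

/-- `w` is primitive if it is not of the form `x^j` for any `j ≥ 2`. -/
def Primitive (w : Word) : Prop := ¬ ∃ (x : Word) (j : ℕ), 2 ≤ j ∧ w = (List.replicate j x).flatten

/-- `u` occurs in `w` at (0-indexed) position `i`. -/
def occursAt (u w : Word) (i : ℕ) : Prop :=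
  i + u.length ≤ w.length ∧ (w.drop i).take u.length = u

instance (u w : Word) (i : ℕ) : Decidable (occursAt u w i) := by
  unfold occursAt; infer_instance

/-- Fibonacci words: `F 1 = b`, `F 2 = a`, `F (k+1) = F k ++ F (k-1)`. -/
def F : ℕ → Word
  | 0 => []
  | 1 => [true]
  | 2 => [false]
  | (n+3) => F (n+2) ++ F (n+1)

/-- Fibonacci numbers with `f 1 = f 2 = 1`. -/
def f : ℕ → ℕ
  | 0 => 0
  | 1 => 1
  | (n+2) => f (n+1) + f n

/-- The morphism `φ(a) = aab`, `φ(b) = ab`. -/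
def phi (w : Word) : Word := w.flatMap fun c => if c then [false, true] else [false, false, true]

/-- Lexicographic order on words induced by `a < b` (a proper prefix is smaller). -/
def wlt (x y : Word) : Prop := List.Lex (· < ·) x y

/-- `u` is a border of `w`: a proper substring that is both a prefix and a suffix. -/
def IsBorder (u w : Word) : Prop := u ≠ w ∧ u <+: w ∧ u <:+ w

/-- `w` is a Lyndon word: it is smaller than all of its proper nonempty suffixes. -/
def IsLyndon (w : Word) : Prop := ∀ s : Word, s <:+ w → s ≠ [] → s ≠ w → wlt w s

/-- `fs` is the Lyndon factorization of `w`: a factorization into nonempty Lyndon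
words that is lexicographically non-increasing (powers written as repetitions). -/
def IsLyndonFactorization (w : Word) (fs : List Word) : Prop :=
  fs.flatten = w ∧ (∀ x ∈ fs, IsLyndon x ∧ x ≠ []) ∧ List.Chain' (fun x y => ¬ wlt x y) fs

/-- `ℓ 1 = ab`, `ℓ (k+1) = φ (ℓ k)`. -/
def ell : ℕ → Word
  | 0 => []
  | 1 => [false, true]
  | (n+2) => phi (ell (n+1))

lemma wlt_trans {x y z : Word} (h1 : wlt x y) (h2 : wlt y z) : wlt x z := by
  unfold wlt at *; exact List.lex_trans (fun h₁ h₂ => lt_trans h₁ h₂) h1 h2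

lemma lex_ab (C : Word) : ∀ x y : Word, wlt (C ++ false :: x) (C ++ true :: y) := by
  induction C with
  | nil => intro x y; exact List.Lex.rel (by decide)
  | cons c C ih => intro x y; exact List.Lex.cons (ih x y)

lemma wlt_append (C : Word) {x y : Word} (h : wlt x y) : wlt (C ++ x) (C ++ y) := by
  induction C with
  | nil => exact h
  | cons c C ih => exact List.Lex.cons ih

lemma F_eq (n : ℕ) : F (n+3) = F (n+2) ++ F (n+1) := rfl
lemma f_eq (n : ℕ) : f (n+2) = f (n+1) + f n := rfl

lemma F_len : ∀ n, (F n).length = f n := by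
  intro n
  induction n using Nat.strong_induction_on with
  | _ n ih =>
    match n with
    | 0 => rfl
    | 1 => rfl
    | 2 => rfl
    | (m+3) =>
      show (F (m+2) ++ F (m+1)).length = f (m+2) + f (m+1)
      rw [List.length_append, ih (m+2) (by omega), ih (m+1) (by omega)]

lemma f_pos : ∀ n, 0 < f (n+1) := by
  intro n
  induction n with
  | zero => decide
  | succ m ih => show 0 < f (m+1) + f m; omega

lemma swapE : ∀ a, ∃ C : Word, F (2*a+1) ++ F (2*a+2) = C ++ [true, false] ∧
    F (2*a+2) ++ F (2*a+1) = C ++ [false, true] := by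
  intro a
  induction a with
  | zero => exact ⟨[], by decide, by decide⟩
  | succ b ih =>
    obtain ⟨C, h1, h2⟩ := ih
    have e3 : F (2*b+3) = F (2*b+2) ++ F (2*b+1) := F_eq (2*b)
    have e4 : F (2*b+4) = F (2*b+3) ++ F (2*b+2) := F_eq (2*b+1)
    have o1 : F (2*b+2) ++ F (2*b+3) = (F (2*b+2) ++ C) ++ [false, true] := by
      rw [e3, ← List.append_assoc, List.append_assoc _ _ (F (2*b+1)), h2]; simp
    have o2 : F (2*b+3) ++ F (2*b+2) = (F (2*b+2) ++ C) ++ [true, false] := by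
      rw [e3, List.append_assoc, h1]; simp
    refine ⟨F (2*b+3) ++ (F (2*b+2) ++ C), ?_, ?_⟩
    · have eA : 2*(b+1)+1 = 2*b+3 := by omega
      have eB : 2*(b+1)+2 = 2*b+4 := by omega
      rw [eA, eB, e4, ← List.append_assoc, List.append_assoc _ _ (F (2*b+2)), o2]; simp
    · have eA : 2*(b+1)+1 = 2*b+3 := by omega
      have eB : 2*(b+1)+2 = 2*b+4 := by omega
      rw [eA, eB, e4, List.append_assoc, o1]; simp

/-- swap at odd level: `F(2a+2)++F(2a+3) = C ++ [a,b]`, `F(2a+3)++F(2a+2) = C ++ [b,a]` -/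
lemma swapO (a : ℕ) : ∃ C : Word, F (2*a+2) ++ F (2*a+3) = C ++ [false, true] ∧
    F (2*a+3) ++ F (2*a+2) = C ++ [true, false] := by
  obtain ⟨C, h1, h2⟩ := swapE a
  have e3 : F (2*a+3) = F (2*a+2) ++ F (2*a+1) := F_eq (2*a)
  refine ⟨F (2*a+2) ++ C, ?_, ?_⟩
  · rw [e3, ← List.append_assoc, List.append_assoc _ _ (F (2*a+1)), h2]; simp
  · rw [e3, List.append_assoc, h1]; simp

/-- `ltA`: for odd m=2a+1 : F(m+1)F(m)·u < F(m)F(m+1)·v -/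
lemma ltA (a : ℕ) (u v : Word) : wlt (F (2*a+2) ++ (F (2*a+1) ++ u)) (F (2*a+1) ++ (F (2*a+2) ++ v)) := by
  obtain ⟨C, h1, h2⟩ := swapE a
  have l : F (2*a+2) ++ (F (2*a+1) ++ u) = C ++ false :: (true :: u) := by
    rw [← List.append_assoc, h2]; simp
  have r : F (2*a+1) ++ (F (2*a+2) ++ v) = C ++ true :: (false :: v) := by
    rw [← List.append_assoc, h1]; simp
  rw [l, r]; exact lex_ab C _ _

/-- `ltB`: for even m=2a+2 : F(m)F(m+1)·u < F(m+1)F(m)·v -/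
lemma ltB (a : ℕ) (u v : Word) : wlt (F (2*a+2) ++ (F (2*a+3) ++ u)) (F (2*a+3) ++ (F (2*a+2) ++ v)) := by
  obtain ⟨C, h1, h2⟩ := swapO a
  have l : F (2*a+2) ++ (F (2*a+3) ++ u) = C ++ false :: (true :: u) := by
    rw [← List.append_assoc, h1]; simp
  have r : F (2*a+3) ++ (F (2*a+2) ++ v) = C ++ true :: (false :: v) := by
    rw [← List.append_assoc, h2]; simp
  rw [l, r]; exact lex_ab C _ _

lemma lex_ab0 {x y : Word} : wlt (false :: x) (true :: y) := List.Lex.rel (by decide)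

/-- ladder: `F(2a+3) ++ Y < F(2a+1) ++ F(2a+2) ++ X` -/
lemma Lad : ∀ a, ∀ X Y : Word, wlt (F (2*a+3) ++ Y) (F (2*a+1) ++ (F (2*a+2) ++ X)) := by
  intro a
  match a with
  | 0 =>
    intro X Y
    show wlt ((F 3) ++ Y) (F 1 ++ (F 2 ++ X))
    have l : F 3 ++ Y = false :: (true :: Y) := rfl
    have r : F 1 ++ (F 2 ++ X) = true :: (false :: X) := rfl
    rw [l, r]; exact lex_ab0
  | (c+1) =>
    intro X Y
    have eA : 2*(c+1)+3 = 2*c+5 := by omega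
    have eB : 2*(c+1)+1 = 2*c+3 := by omega
    have eC : 2*(c+1)+2 = 2*c+4 := by omega
    rw [eA, eB, eC]
    have e5 : F (2*c+5) = F (2*c+4) ++ F (2*c+3) := F_eq (2*c+2)
    have e4 : F (2*c+4) = F (2*c+3) ++ F (2*c+2) := F_eq (2*c+1)
    have l : F (2*c+5) ++ Y = F (2*c+3) ++ (F (2*c+2) ++ (F (2*c+3) ++ Y)) := by
      rw [e5, e4]; simp
    have r : F (2*c+3) ++ (F (2*c+4) ++ X) = F (2*c+3) ++ (F (2*c+3) ++ (F (2*c+2) ++ X)) := by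
      rw [e4]; simp
    rw [l, r]
    exact wlt_append _ (ltB c _ _)

lemma endsB : ∀ a, ∃ C : Word, F (2*a+3) = C ++ [true] ∧ C.length = f (2*a+3) - 1 := by
  intro a
  induction a with
  | zero => exact ⟨[false], by decide, by decide⟩
  | succ b ih =>
    obtain ⟨C, h1, h2⟩ := ih
    have eA : 2*(b+1)+3 = 2*b+5 := by omega
    have e5 : F (2*b+5) = F (2*b+4) ++ F (2*b+3) := F_eq (2*b+2)
    refine ⟨F (2*b+4) ++ C, ?_, ?_⟩
    · rw [eA, e5, h1]; simp
    · rw [List.length_append, F_len, h2, eA]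
      have e1 : f (2*b+5) = f (2*b+4) + f (2*b+3) := f_eq (2*b+3)
      have hp : 0 < f (2*b+3) := f_pos (2*b+2)
      omega

lemma dropEnd (a : ℕ) : (F (2*a+3)).drop (f (2*a+3) - 1) = [true] := by
  obtain ⟨C, h1, h2⟩ := endsB a
  rw [h1, List.drop_left' h2]

lemma dropP (a : ℕ) : (F (2*a+5)).drop (f (2*a+3) - 1) = true :: (F (2*a+2) ++ F (2*a+3)) := by
  obtain ⟨C, h1, h2⟩ := endsB a
  have e5 : F (2*a+5) = F (2*a+4) ++ F (2*a+3) := F_eq (2*a+2)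
  have e4 : F (2*a+4) = F (2*a+3) ++ F (2*a+2) := F_eq (2*a+1)
  have : F (2*a+5) = C ++ (true :: (F (2*a+2) ++ F (2*a+3))) := by
    rw [e5, e4, h1]; simp
  rw [this, List.drop_left' h2]

/-- chain B : `F(2a+2) ++ F(2a+3) ++ X < F(2a+4) ++ Y` -/
lemma chainB (a : ℕ) (X Y : Word) :
    wlt (F (2*a+2) ++ (F (2*a+3) ++ X)) (F (2*a+4) ++ Y) := by
  have e4 : F (2*a+4) = F (2*a+3) ++ F (2*a+2) := F_eq (2*a+1)
  rw [e4, List.append_assoc]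
  exact ltB a X Y

/-- chain A : `F(2a+2) ++ F(2a+3) ++ X < F(2a+6) ++ Y` -/
lemma chainA : ∀ a, ∀ X Y : Word, wlt (F (2*a+2) ++ (F (2*a+3) ++ X)) (F (2*a+6) ++ Y) := by
  intro a
  match a with
  | 0 =>
    intro X Y
    have l : F (2*0+2) ++ (F (2*0+3) ++ X) = [false] ++ false :: (true :: X) := rfl
    have r : F (2*0+6) ++ Y = [false] ++ true :: ([false,false,true,false,true,false] ++ Y) := rfl
    rw [l, r]; exact lex_ab [false] _ _
  | (c+1) =>
    intro X Y
    show wlt (F (2*c+4) ++ (F (2*c+5) ++ X)) (F (2*c+8) ++ Y)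
    have e5 : F (2*c+5) = F (2*c+4) ++ F (2*c+3) := F_eq (2*c+2)
    have e4 : F (2*c+4) = F (2*c+3) ++ F (2*c+2) := F_eq (2*c+1)
    have e6 : F (2*c+6) = F (2*c+5) ++ F (2*c+4) := F_eq (2*c+3)
    have e7 : F (2*c+7) = F (2*c+6) ++ F (2*c+5) := F_eq (2*c+4)
    have e8 : F (2*c+8) = F (2*c+7) ++ F (2*c+6) := F_eq (2*c+5)
    have e5' : F (2*c+5) = F (2*c+3) ++ (F (2*c+2) ++ F (2*c+3)) := by
      rw [e5, e4, List.append_assoc]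
    have l : F (2*c+4) ++ (F (2*c+5) ++ X) =
        (F (2*c+4) ++ F (2*c+3)) ++ (F (2*c+2) ++ (F (2*c+3) ++ X)) := by
      rw [e5']; simp [List.append_assoc]
    have r : F (2*c+8) ++ Y =
        (F (2*c+4) ++ F (2*c+3)) ++ (F (2*c+4) ++ (F (2*c+5) ++ (F (2*c+6) ++ Y))) := by
      rw [e8, e7]
      nth_rewrite 1 [e6]
      nth_rewrite 1 [e5]
      simp [List.append_assoc]
    rw [l, r]
    exact wlt_append _ (chainB c _ _)

lemma QsBase : ∀ (u v : Word) (j : ℕ), j < f 5 → j ≠ f 3 - 1 → j ≠ f 5 - 1 →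
    wlt ((F 5).drop j ++ u) (true :: (F 2 ++ (F 3 ++ v))) := by
  intro u v j hj h1 h2
  have hf5 : f 5 = 5 := rfl
  have hf3 : f 3 = 2 := rfl
  rw [hf5] at hj h2; rw [hf3] at h1
  interval_cases j
  · exact lex_ab [] ([true,false,false,true] ++ u) (false :: (F 3 ++ v))
  · omega
  · exact lex_ab [] ([false,true] ++ u) (false :: (F 3 ++ v))
  · exact lex_ab [] ([true] ++ u) (false :: (F 3 ++ v))
  · omega

lemma Qs'Base : ∀ (u v : Word) (j : ℕ), j < f 4 →
    wlt ((F 4).drop j ++ (F 5 ++ u)) (true :: (F 4 ++ (F 5 ++ v))) := by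
  intro u v j hj
  have hf4 : f 4 = 3 := rfl
  rw [hf4] at hj
  interval_cases j
  · exact lex_ab [] ([true,false] ++ (F 5 ++ u)) (F 4 ++ (F 5 ++ v))
  · exact lex_ab [true,false] ([true,false,false,true] ++ u) ([false,false,true,false,false,true] ++ v)
  · exact lex_ab [] (F 5 ++ u) (F 4 ++ (F 5 ++ v))

lemma QQ : ∀ a : ℕ,
    (∀ (u v : Word) (j : ℕ), j < f (2*a+5) → j ≠ f (2*a+3) - 1 → j ≠ f (2*a+5) - 1 →
      wlt ((F (2*a+5)).drop j ++ u) (true :: (F (2*a+2) ++ (F (2*a+3) ++ v)))) ∧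
    (∀ (u v : Word) (j : ℕ), j < f (2*a+4) →
      wlt ((F (2*a+4)).drop j ++ (F (2*a+5) ++ u)) (true :: (F (2*a+4) ++ (F (2*a+5) ++ v)))) := by
  intro a
  induction a with
  | zero => exact ⟨QsBase, Qs'Base⟩
  | succ b ih =>
    obtain ⟨qb, qb'⟩ := ih
    have e4 : F (2*b+4) = F (2*b+3) ++ F (2*b+2) := F_eq (2*b+1)
    have e5 : F (2*b+5) = F (2*b+4) ++ F (2*b+3) := F_eq (2*b+2)
    have e6 : F (2*b+6) = F (2*b+5) ++ F (2*b+4) := F_eq (2*b+3)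
    have e7 : F (2*b+7) = F (2*b+6) ++ F (2*b+5) := F_eq (2*b+4)
    have g5 : f (2*b+5) = f (2*b+4) + f (2*b+3) := f_eq (2*b+3)
    have g6 : f (2*b+6) = f (2*b+5) + f (2*b+4) := f_eq (2*b+4)
    have g7 : f (2*b+7) = f (2*b+6) + f (2*b+5) := f_eq (2*b+5)
    have p3 : 0 < f (2*b+3) := f_pos (2*b+2)
    have p4 : 0 < f (2*b+4) := f_pos (2*b+3)
    have p5 : 0 < f (2*b+5) := f_pos (2*b+4)
    have l5 : (F (2*b+5)).length = f (2*b+5) := F_len _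
    have l6 : (F (2*b+6)).length = f (2*b+6) := F_len _
    have bnd : ∀ v : Word, wlt (true :: (F (2*b+2) ++ (F (2*b+3) ++ v)))
        (true :: (F (2*b+4) ++ (F (2*b+5) ++ v))) :=
      fun v => List.Lex.cons (chainB b v (F (2*b+5) ++ v))
    have e7' : F (2*b+7) = F (2*b+5) ++ (F (2*b+4) ++ F (2*b+5)) := by
      rw [e7, e6]; simp [List.append_assoc]
    have dropE5 : (F (2*b+5)).drop (f (2*b+5) - 1) = [true] := dropEnd (b+1)
    have ltB1 : ∀ u' v' : Word, wlt (F (2*b+4) ++ (F (2*b+5) ++ u'))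
        (F (2*b+5) ++ (F (2*b+4) ++ v')) := fun u' v' => ltB (b+1) u' v'
    constructor
    · -- Qs (b+1)
      intro u v j hj hne1 hne2
      have hj' : j < f (2*b+7) := hj
      have hne1' : j ≠ f (2*b+5) - 1 := hne1
      have hne2' : j ≠ f (2*b+7) - 1 := hne2
      show wlt ((F (2*b+7)).drop j ++ u) (true :: (F (2*b+4) ++ (F (2*b+5) ++ v)))
      rcases Nat.lt_or_ge j (f (2*b+5)) with h1 | h1
      · -- R1
        have hd : (F (2*b+7)).drop j ++ u
            = (F (2*b+5)).drop j ++ (F (2*b+4) ++ (F (2*b+5) ++ u)) := by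
          rw [e7', List.drop_append_of_le_length (by rw [l5]; omega)]
          simp [List.append_assoc]
        rcases eq_or_ne j (f (2*b+3) - 1) with he | he
        · rw [hd, he, dropP b, List.cons_append]
          refine List.Lex.cons ?_
          rw [List.append_assoc]
          exact chainB b _ _
        · rw [hd]
          exact wlt_trans (qb _ v j h1 he hne1') (bnd v)
      · rcases Nat.lt_or_ge j (f (2*b+6)) with h2 | h2
        · -- R2
          obtain ⟨i, rfl⟩ : ∃ i, j = f (2*b+5) + i := ⟨j - f (2*b+5), by omega⟩
          have hd : (F (2*b+7)).drop (f (2*b+5) + i) ++ u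
              = (F (2*b+4)).drop i ++ (F (2*b+5) ++ u) := by
            rw [e7', show f (2*b+5) + i = (F (2*b+5)).length + i by rw [l5],
              List.drop_length_add_append, List.drop_append_of_le_length (by rw [F_len]; omega)]
            simp [List.append_assoc]
          rw [hd]
          exact qb' u v i (by omega)
        · -- R3
          obtain ⟨i, rfl⟩ : ∃ i, j = f (2*b+6) + i := ⟨j - f (2*b+6), by omega⟩
          have hi : i < f (2*b+5) := by omega
          have hd : (F (2*b+7)).drop (f (2*b+6) + i) ++ u = (F (2*b+5)).drop i ++ u := by
            rw [e7, show f (2*b+6) + i = (F (2*b+6)).length + i by rw [l6], List.drop_length_add_append]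
          rw [hd]
          rcases eq_or_ne i (f (2*b+3) - 1) with he | he
          · rw [he, dropP b, List.cons_append]
            refine List.Lex.cons ?_
            rw [List.append_assoc]
            exact chainB b _ _
          · have hne : i ≠ f (2*b+5) - 1 := by omega
            exact wlt_trans (qb u v i hi he hne) (bnd v)
    · -- Qs' (b+1)
      intro u v j hj
      have hj' : j < f (2*b+6) := hj
      show wlt ((F (2*b+6)).drop j ++ (F (2*b+7) ++ u)) (true :: (F (2*b+6) ++ (F (2*b+7) ++ v)))
      have lR : F (2*b+6) ++ (F (2*b+7) ++ v) = F (2*b+5) ++ (F (2*b+4) ++ (F (2*b+7) ++ v)) := by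
        rw [e6]; simp [List.append_assoc]
      rcases Nat.lt_or_ge j (f (2*b+5)) with h1 | h1
      · have hd : (F (2*b+6)).drop j ++ (F (2*b+7) ++ u)
            = (F (2*b+5)).drop j ++ (F (2*b+4) ++ (F (2*b+7) ++ u)) := by
          rw [e6, List.drop_append_of_le_length (by rw [l5]; omega)]
          simp [List.append_assoc]
        rw [hd]
        rcases eq_or_ne j (f (2*b+3) - 1) with he | he
        · rw [he, dropP b, List.cons_append]
          refine List.Lex.cons ?_
          rw [List.append_assoc]
          exact chainA b _ _
        · rcases eq_or_ne j (f (2*b+5) - 1) with he2 | he2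
          · rw [he2, dropE5, List.singleton_append]
            refine List.Lex.cons ?_
            have lL : F (2*b+4) ++ (F (2*b+7) ++ u)
                = F (2*b+4) ++ (F (2*b+5) ++ ((F (2*b+4) ++ F (2*b+5)) ++ u)) := by
              rw [e7']; simp [List.append_assoc]
            rw [lL, lR]
            exact ltB1 _ _
          · exact wlt_trans (qb _ v j h1 he he2)
              (List.Lex.cons (chainA b v (F (2*b+7) ++ v)))
      · obtain ⟨i, rfl⟩ : ∃ i, j = f (2*b+5) + i := ⟨j - f (2*b+5), by omega⟩
        have hi : i < f (2*b+4) := by omega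
        have hd : (F (2*b+6)).drop (f (2*b+5) + i) ++ (F (2*b+7) ++ u)
            = (F (2*b+4)).drop i ++ (F (2*b+5) ++ (F (2*b+4) ++ (F (2*b+5) ++ u))) := by
          rw [e6, show f (2*b+5) + i = (F (2*b+5)).length + i by rw [l5],
            List.drop_append, e7']
          simp [List.append_assoc]
        rw [hd]
        refine wlt_trans (qb' (F (2*b+4) ++ (F (2*b+5) ++ u)) v i hi) ?_
        refine List.Lex.cons ?_
        rw [lR]
        exact ltB1 _ _

def Tt (k : ℕ) : Word := (F (2*k)).dropLast.dropLast ++ [false, false]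

lemma Tstruct (b : ℕ) : ∃ C : Word, Tt (b+2) = C ++ [false, false] ∧
    F (2*b+2) ++ F (2*b+3) = C ++ [false, true] ∧ F (2*b+4) = C ++ [true, false] ∧
    C.length = f (2*b+4) - 2 := by
  obtain ⟨C, h1, h2⟩ := swapO b
  have e4 : F (2*b+4) = F (2*b+3) ++ F (2*b+2) := F_eq (2*b+1)
  have h4 : F (2*b+4) = C ++ [true, false] := by rw [e4, h2]
  have hdl : (F (2*b+4)).dropLast.dropLast = C := by
    rw [h4, show C ++ [true, false] = (C ++ [true]) ++ [false] by simp,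
      List.dropLast_concat, List.dropLast_concat]
  have hT : Tt (b+2) = C ++ [false, false] := by
    show (F (2*b+4)).dropLast.dropLast ++ [false, false] = C ++ [false, false]
    rw [hdl]
  refine ⟨C, hT, h1, h4, ?_⟩
  have := F_len (2*b+4)
  rw [h4] at this
  simp at this
  omega

lemma Tlen (b : ℕ) : (Tt (b+2)).length = f (2*b+4) := by
  obtain ⟨C, h1, _, _, h4⟩ := Tstruct b
  have g4 : f (2*b+4) = f (2*b+3) + f (2*b+2) := f_eq (2*b+2)
  have p3 : 0 < f (2*b+3) := f_pos (2*b+2)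
  have p2 : 0 < f (2*b+2) := f_pos (2*b+1)
  rw [h1]
  simp
  omega

lemma Tsplit (b : ℕ) : Tt (b+3) = F (2*b+5) ++ Tt (b+2) := by
  obtain ⟨C, h1, _, h4, _⟩ := Tstruct b
  have e6 : F (2*b+6) = F (2*b+5) ++ F (2*b+4) := F_eq (2*b+3)
  show (F (2*b+6)).dropLast.dropLast ++ [false, false] = F (2*b+5) ++ Tt (b+2)
  have hdl : (F (2*b+6)).dropLast.dropLast = F (2*b+5) ++ C := by
    rw [e6, h4, show F (2*b+5) ++ (C ++ [true, false])
        = ((F (2*b+5) ++ C) ++ [true]) ++ [false] by simp,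
      List.dropLast_concat, List.dropLast_concat]
  rw [hdl, h1]
  simp

/-- the master induction -/
lemma Mst : ∀ c : ℕ, ∀ j, j < f (2*(c+1)+4) →
    (Tt (c+3)).drop j = (Tt (c+3)).drop (f (2*(c+1)+1) - 1) ∨
    wlt ((Tt (c+3)).drop j) ((Tt (c+3)).drop (f (2*(c+1)+1) - 1)) := by
  intro c
  induction c with
  | zero =>
    intro j hj
    have hj' : j < 8 := hj
    have : Tt 3 = [false,true,false,false,true,false,false,false] := rfl
    rw [this, show f (2*(0+1)+1) - 1 = 1 from rfl]
    interval_cases j <;> simp [wlt] <;> decide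
  | succ c ih =>
    intro j hj
    have hj' : j < f (2*c+8) := hj
    have g8 : f (2*c+8) = f (2*c+7) + f (2*c+6) := f_eq (2*c+6)
    have g7 : f (2*c+7) = f (2*c+6) + f (2*c+5) := f_eq (2*c+5)
    have g5 : f (2*c+5) = f (2*c+4) + f (2*c+3) := f_eq (2*c+3)
    have p5 : 0 < f (2*c+5) := f_pos (2*c+4)
    have p3 : 0 < f (2*c+3) := f_pos (2*c+2)
    have p7 : 0 < f (2*c+7) := f_pos (2*c+6)
    have l7 : (F (2*c+7)).length = f (2*c+7) := F_len _
    have tsp : Tt (c+4) = F (2*c+7) ++ Tt (c+3) := Tsplit (c+1)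
    have hp : f (2*c+5) - 1 < f (2*c+7) := by omega
    have dp : (F (2*c+7)).drop (f (2*c+5) - 1) = true :: (F (2*c+4) ++ F (2*c+5)) := dropP (c+1)
    have hs : (Tt (c+4)).drop (f (2*c+5) - 1)
        = true :: (F (2*c+4) ++ (F (2*c+5) ++ Tt (c+3))) := by
      rw [tsp, List.drop_append_of_le_length (by rw [l7]; omega), dp]
      simp [List.append_assoc]
    show (Tt (c+4)).drop j = (Tt (c+4)).drop (f (2*c+5) - 1) ∨
      wlt ((Tt (c+4)).drop j) ((Tt (c+4)).drop (f (2*c+5) - 1))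
    rcases eq_or_ne j (f (2*c+5) - 1) with he | he
    · left; rw [he]
    right
    rw [hs]
    rcases Nat.lt_or_ge j (f (2*c+7)) with h1 | h1
    · -- inside the F(2c+7) block
      have hd : (Tt (c+4)).drop j = (F (2*c+7)).drop j ++ Tt (c+3) := by
        rw [tsp, List.drop_append_of_le_length (by rw [l7]; omega)]
      rw [hd]
      rcases eq_or_ne j (f (2*c+7) - 1) with he2 | he2
      · -- runner-up suffix
        have dE : (F (2*c+7)).drop (f (2*c+7) - 1) = [true] := dropEnd (c+2)
        rw [he2, dE, List.singleton_append]
        obtain ⟨C, h1C, h2C, _, _⟩ := Tstruct (c+1)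
        have hTc : Tt (c+3) = C ++ [false, false] := h1C
        have h2C' : F (2*c+4) ++ F (2*c+5) = C ++ [false, true] := h2C
        refine List.Lex.cons ?_
        have hRR : F (2*c+4) ++ (F (2*c+5) ++ Tt (c+3))
            = (C ++ [false]) ++ (true :: Tt (c+3)) := by
          rw [← List.append_assoc, h2C']; simp
        rw [hRR, hTc, show C ++ [false, false] = (C ++ [false]) ++ (false :: []) by simp]
        exact lex_ab (C ++ [false]) _ _
      · -- generic: Q
        exact (QQ (c+1)).1 (Tt (c+3)) (Tt (c+3)) j h1 he he2
    · -- inside the Tt(c+3) tail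
      obtain ⟨i, rfl⟩ : ∃ i, j = f (2*c+7) + i := ⟨j - f (2*c+7), by omega⟩
      have hi : i < f (2*c+6) := by omega
      have hd : (Tt (c+4)).drop (f (2*c+7) + i) = (Tt (c+3)).drop i := by
        rw [tsp, show f (2*c+7) + i = (F (2*c+7)).length + i by rw [l7], List.drop_length_add_append]
      rw [hd]
      -- s' < s
      have tsp' : Tt (c+3) = F (2*c+5) ++ Tt (c+2) := Tsplit c
      have l5 : (F (2*c+5)).length = f (2*c+5) := F_len _
      have hs' : (Tt (c+3)).drop (f (2*c+3) - 1)
          = true :: ((F (2*c+2) ++ F (2*c+3)) ++ Tt (c+2)) := by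
        rw [tsp', List.drop_append_of_le_length (by rw [l5]; omega), dropP c]
        simp [List.append_assoc]
      have Sless : wlt ((Tt (c+3)).drop (f (2*c+3) - 1))
          (true :: (F (2*c+4) ++ (F (2*c+5) ++ Tt (c+3)))) := by
        rw [hs']
        refine List.Lex.cons ?_
        rw [List.append_assoc]
        exact chainB c _ _
      rcases ih i hi with hcase | hcase
      · rw [hcase]; exact Sless
      · exact wlt_trans hcase Sless

/-- For `k ≥ 6`, the lexicographically largest suffix of
`T (2k) = F'' (2k) ++ aa` starts at (1-indexed) position `f (2k−3)`. -/
theorem stmt17 (k : ℕ) (hk : 6 ≤ k) :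
    let T : Word := (F (2 * k)).dropLast.dropLast ++ [false, false]
    let p : ℕ := f (2 * k - 3) - 1
    ∀ j < T.length, T.drop j = T.drop p ∨ wlt (T.drop j) (T.drop p) := by
  intro T p j hj
  obtain ⟨c, rfl⟩ : ∃ c, k = c + 4 := ⟨k - 4, by omega⟩
  have hT : T = Tt (c+4) := rfl
  have hp : p = f (2*(c+1+1)+1) - 1 := by
    show f (2*(c+4) - 3) - 1 = f (2*(c+1+1)+1) - 1
    rw [show 2*(c+4) - 3 = 2*(c+1+1)+1 by omega]
  have hlen : T.length = f (2*(c+1+1)+4) := by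
    rw [hT]; exact Tlen (c+2)
  rw [hT, hp]
  exact Mst (c+1) j (by rw [← hlen]; exact hj)
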